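/- If A is an M-matrix with a triplet representation, then A is either nonsingular or 0 is a semisimple eigenvalue of A (i.e., the algebraic and geometric multiplicities of the eigenvalue 0 coincide). -/

import Mathlib

open Matrix

noncomputable def toC {n : ℕ} (A : Matrix (Fin n) (Fin n) ℝ) : Matrix (Fin n) (Fin n) ℂ :=
  A.map (fun x => (x : ℂ))

def IsEig {n : ℕ} (A : Matrix (Fin n) (Fin n) ℂ) (μ : ℂ) : Prop :=
  ∃ v : Fin n → ℂ, v ≠ 0 ∧ A *ᵥ v = μ • v

noncomputable def specRad {n : ℕ} (B : Matrix (Fin n) (Fin n) ℝ) : ℝ :=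
  sSup {r : ℝ | ∃ μ : ℂ, IsEig (toC B) μ ∧ r = ‖μ‖}

def IsMmat {n : ℕ} (A : Matrix (Fin n) (Fin n) ℝ) : Prop :=
  ∃ (α : ℝ) (B : Matrix (Fin n) (Fin n) ℝ),
    (∀ i j, 0 ≤ B i j) ∧ specRad B ≤ α ∧ A = α • (1 : Matrix (Fin n) (Fin n) ℝ) - B

/-- If A is an M-matrix with a triplet representation, then A is nonsingular or
0 is a semisimple eigenvalue (ker A = ker A², over ℂ). -/
theorem stmt4 {n : ℕ} (A : Matrix (Fin n) (Fin n) ℝ) (hA : IsMmat A)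
    (u v : Fin n → ℝ) (hu : ∀ i, 0 < u i) (hv : ∀ i, 0 ≤ v i) (hAu : A *ᵥ u = v) :
    IsUnit A ∨ ∀ x : Fin n → ℂ, toC A *ᵥ (toC A *ᵥ x) = 0 → toC A *ᵥ x = 0 := by
  obtain ⟨α, B, hB, -, hAeq⟩ := hA
  rcases Nat.eq_zero_or_pos n with hn | hn
  · right; intro x _; funext i
    exact absurd i.2 (by omega)
  -- B *ᵥ u ≤ α • u
  have hBu : ∀ i, (B *ᵥ u) i ≤ α * u i := by
    intro i
    have h := congrFun hAu i
    rw [hAeq] at h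
    simp only [Matrix.sub_mulVec, smul_mulVec, Matrix.one_mulVec, Pi.sub_apply,
      Pi.smul_apply, smul_eq_mul] at h
    have := hv i
    linarith
  have hBu0 : ∀ i, 0 ≤ (B *ᵥ u) i := by
    intro i
    simp only [Matrix.mulVec, dotProduct]
    exact Finset.sum_nonneg fun j _ => mul_nonneg (hB i j) (le_of_lt (hu j))
  have hα : 0 ≤ α := by
    have i : Fin n := ⟨0, hn⟩
    nlinarith [hBu i, hBu0 i, hu i]
  right
  intro x hx
  set y := toC A *ᵥ x with hy
  have hAc : ∀ z : Fin n → ℂ, toC A *ᵥ z = (α:ℂ) • z - toC B *ᵥ z := by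
    intro z
    funext i
    simp [hAeq, toC, Matrix.mulVec, dotProduct, Matrix.sub_apply, Matrix.smul_apply,
      Matrix.one_apply, sub_mul, Finset.sum_sub_distrib, ite_mul, Pi.smul_apply, smul_eq_mul,
      Pi.sub_apply, apply_ite, Finset.sum_ite_eq]
  have hBx : toC B *ᵥ x = (α:ℂ) • x - y := by
    rw [hy, hAc x]; abel
  have hBy : toC B *ᵥ y = (α:ℂ) • y := by
    have h := hx
    rw [hAc y, sub_eq_zero] at h
    exact h.symm
  -- powers
  set w : ℕ → Fin n → ℂ := fun k => (toC B ^ k) *ᵥ x with hw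
  have hwsucc : ∀ k, w (k+1) = toC B *ᵥ w k := by
    intro k
    simp only [hw, pow_succ', Matrix.mulVec_mulVec]
  have hform : ∀ k : ℕ, w (k+1) = ((α:ℂ)^(k+1)) • x - (((k:ℂ)+1) * (α:ℂ)^k) • y := by
    intro k
    induction k with
    | zero =>
      rw [hwsucc 0]
      simp only [hw, pow_zero, Matrix.one_mulVec, pow_one, Nat.cast_zero, zero_add, one_mul]
      rw [hBx, one_smul]
    | succ k ih =>
      rw [hwsucc (k+1), ih, Matrix.mulVec_sub, Matrix.mulVec_smul, Matrix.mulVec_smul,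
        hBx, hBy]
      push_cast
      match_scalars <;> ring
  -- bound constant
  set C : ℝ := ∑ j, ‖x j‖ / u j with hC
  have hC0 : 0 ≤ C :=
    Finset.sum_nonneg fun j _ => div_nonneg (norm_nonneg _) (le_of_lt (hu j))
  have hxC : ∀ i, ‖x i‖ ≤ C * u i := by
    intro i
    have h1 : ‖x i‖ / u i ≤ C :=
      Finset.single_le_sum (f := fun j => ‖x j‖ / u j)
        (fun j _ => div_nonneg (norm_nonneg _) (le_of_lt (hu j))) (Finset.mem_univ i)
    rw [div_le_iff₀ (hu i)] at h1
    exact h1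
  have hBstep : ∀ (z : Fin n → ℂ) (c : ℝ), 0 ≤ c → (∀ i, ‖z i‖ ≤ c * u i) →
      ∀ i, ‖(toC B *ᵥ z) i‖ ≤ (α * c) * u i := by
    intro z c hc hz i
    have h1 : ‖(toC B *ᵥ z) i‖ ≤ ∑ j, B i j * ‖z j‖ := by
      calc ‖(toC B *ᵥ z) i‖ = ‖∑ j, (B i j : ℂ) * z j‖ := by
            simp [toC, Matrix.mulVec, dotProduct]
        _ ≤ ∑ j, ‖(B i j : ℂ) * z j‖ := norm_sum_le _ _
        _ = ∑ j, B i j * ‖z j‖ := by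
            apply Finset.sum_congr rfl
            intro j _
            rw [norm_mul, Complex.norm_real, Real.norm_eq_abs, abs_of_nonneg (hB i j)]
    have h2 : ∑ j, B i j * ‖z j‖ ≤ ∑ j, B i j * (c * u j) :=
      Finset.sum_le_sum fun j _ => mul_le_mul_of_nonneg_left (hz j) (hB i j)
    have h3 : ∑ j, B i j * (c * u j) = c * (B *ᵥ u) i := by
      simp only [Matrix.mulVec, dotProduct, Finset.mul_sum]
      apply Finset.sum_congr rfl
      intro j _
      ring
    have h4 : c * (B *ᵥ u) i ≤ c * (α * u i) := mul_le_mul_of_nonneg_left (hBu i) hc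
    calc ‖(toC B *ᵥ z) i‖ ≤ ∑ j, B i j * ‖z j‖ := h1
      _ ≤ ∑ j, B i j * (c * u j) := h2
      _ = c * (B *ᵥ u) i := h3
      _ ≤ c * (α * u i) := h4
      _ = (α * c) * u i := by ring
  have hwbound : ∀ k i, ‖w k i‖ ≤ α^k * C * u i := by
    intro k
    induction k with
    | zero =>
      intro i
      simpa [hw] using hxC i
    | succ k ih =>
      intro i
      have := hBstep (w k) (α^k * C) (mul_nonneg (pow_nonneg hα k) hC0) ih i
      rw [hwsucc]
      calc ‖(toC B *ᵥ w k) i‖ ≤ (α * (α^k * C)) * u i := this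
        _ = α^(k+1) * C * u i := by ring
  -- conclude y = 0
  rcases eq_or_lt_of_le hα with hα0 | hαpos
  · -- α = 0 : B = 0, so y = -B x = ... directly y = α x - Bx = 0
    have hB0 : B = 0 := by
      ext i j
      have h1 : (B *ᵥ u) i ≤ 0 := by rw [← hα0] at hBu; simpa using hBu i
      have h2 : (B *ᵥ u) i = 0 := le_antisymm h1 (hBu0 i)
      have h3 : ∀ j ∈ Finset.univ, 0 ≤ B i j * u j :=
        fun j _ => mul_nonneg (hB i j) (le_of_lt (hu j))
      have h4 := (Finset.sum_eq_zero_iff_of_nonneg h3).mp h2 j (Finset.mem_univ j)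
      have := (hu j).ne'
      simp only [Matrix.zero_apply]
      rcases mul_eq_zero.mp h4 with h | h
      · exact h
      · exact absurd h this
    have : toC B *ᵥ x = 0 := by
      funext i
      simp [toC, hB0, Matrix.mulVec, dotProduct]
    rw [this, ← hα0] at hBx
    simpa using hBx.symm
  · funext i
    have key : ∀ k : ℕ, ((k:ℝ)+1) * ‖y i‖ ≤ 2 * (α * C) * u i := by
      intro k
      have h1 := congrFun (hform k) i
      have h2 : (((k:ℂ)+1) * (α:ℂ)^k) * y i = ((α:ℂ)^(k+1)) * x i - w (k+1) i := by
        simp only [Pi.sub_apply, Pi.smul_apply, smul_eq_mul] at h1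
        linear_combination h1
      have h3 : ((k:ℝ)+1) * α^k * ‖y i‖ =
          ‖(((k:ℂ)+1) * (α:ℂ)^k) * y i‖ := by
        rw [norm_mul, norm_mul]
        have e1 : ‖(k:ℂ)+1‖ = (k:ℝ)+1 := by
          rw [show ((k:ℂ)+1) = (((k:ℝ)+1 : ℝ) : ℂ) by push_cast; ring, Complex.norm_real, Real.norm_eq_abs,
            abs_of_nonneg (by positivity)]
        have e2 : ‖(α:ℂ)^k‖ = α^k := by
          rw [norm_pow, Complex.norm_real, Real.norm_eq_abs, abs_of_nonneg hα]
        rw [e1, e2]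
      have h4 : ‖(((k:ℂ)+1) * (α:ℂ)^k) * y i‖ ≤ 2 * α^(k+1) * C * u i := by
        rw [h2]
        calc ‖((α:ℂ)^(k+1)) * x i - w (k+1) i‖
            ≤ ‖((α:ℂ)^(k+1)) * x i‖ + ‖w (k+1) i‖ :=
              norm_sub_le _ _
          _ ≤ α^(k+1) * (C * u i) + α^(k+1) * C * u i := by
              gcongr
              · rw [norm_mul, norm_pow, Complex.norm_real, Real.norm_eq_abs, abs_of_nonneg hα]
                exact mul_le_mul_of_nonneg_left (hxC i) (pow_nonneg hα _)
              · exact hwbound (k+1) i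
          _ = 2 * α^(k+1) * C * u i := by ring
      have h5 : ((k:ℝ)+1) * α^k * ‖y i‖ ≤ 2 * α^(k+1) * C * u i := by
        rw [h3]; exact h4
      have hαk : (0:ℝ) < α^k := pow_pos hαpos k
      have h6 : ((k:ℝ)+1) * ‖y i‖ * α^k ≤ 2 * (α * C) * u i * α^k := by
        calc ((k:ℝ)+1) * ‖y i‖ * α^k
            = ((k:ℝ)+1) * α^k * ‖y i‖ := by ring
          _ ≤ 2 * α^(k+1) * C * u i := h5
          _ = 2 * (α * C) * u i * α^k := by ring
      exact le_of_mul_le_mul_right h6 hαk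
    by_contra hyne
    simp only [Pi.zero_apply] at hyne
    have hyi : 0 < ‖y i‖ := norm_pos_iff.mpr hyne
    obtain ⟨k, hk⟩ := exists_nat_gt (2 * (α * C) * u i / ‖y i‖)
    have hkey := key k
    rw [← le_div_iff₀ hyi] at hkey
    linarith
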